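/- For every n ≥ 1 there exists a constant B > 0 with the following property: for every n×n complex positive definite (Hermitian) matrix T there exists γ ∈ SL_n(ℤ[i]) (Gaussian-integer entries, determinant 1) such that, viewing γ as a complex matrix via the canonical embedding ℤ[i] → ℂ, Re((γᴴ · T · γ)₀₀) ≤ B · Re(det T)^{1/n}. -/

import Mathlib

open Matrix MeasureTheory
open scoped ComplexOrder Pointwise

noncomputable section

/-- The 2×2 real matrix representing a complex number. -/
def c2 : ℂ →+* Matrix (Fin 2) (Fin 2) ℝ where
  toFun z := !![z.re, -z.im; z.im, z.re]
  map_one' := by ext i j; fin_cases i <;> fin_cases j <;> simp [Matrix.one_apply]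
  map_mul' z w := by
    ext i j
    fin_cases i <;> fin_cases j <;>
      simp [Matrix.mul_apply, Fin.sum_univ_two, Complex.mul_re, Complex.mul_im] <;> ring
  map_zero' := by ext i j; fin_cases i <;> fin_cases j <;> simp
  map_add' z w := by ext i j; fin_cases i <;> fin_cases j <;> simp [Matrix.add_apply] <;> ring

/-- Realification of a complex matrix. -/
def realify {n : ℕ} (M : Matrix (Fin n) (Fin n) ℂ) :
    Matrix (Fin n × Fin 2) (Fin n × Fin 2) ℝ :=
  fun p q => c2 (M p.1 q.1) p.2 q.2

lemma realify_mul {n : ℕ} (M N : Matrix (Fin n) (Fin n) ℂ) :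
    realify (M * N) = realify M * realify N := by
  ext p q
  simp only [realify, Matrix.mul_apply, Fintype.sum_prod_type]
  rw [map_sum c2]
  rw [Matrix.sum_apply]
  refine Finset.sum_congr rfl fun l _ => ?_
  rw [map_mul c2, Matrix.mul_apply]

lemma realify_one {n : ℕ} : realify (1 : Matrix (Fin n) (Fin n) ℂ) = 1 := by
  ext ⟨i, a⟩ ⟨j, b⟩
  simp only [realify, Matrix.one_apply, Prod.mk.injEq]
  by_cases h : i = j
  · subst h
    simp [Matrix.one_apply]
  · simp [h, map_zero c2]


lemma realify_apply {n : ℕ} (M : Matrix (Fin n) (Fin n) ℂ) (p q : Fin n × Fin 2) :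
    realify M p q = !![(M p.1 q.1).re, -(M p.1 q.1).im; (M p.1 q.1).im, (M p.1 q.1).re] p.2 q.2 :=
  rfl

lemma realify_diagonal_real {n : ℕ} (v : Fin n → ℝ) :
    realify (Matrix.diagonal fun j => ((v j : ℝ) : ℂ)) =
      Matrix.diagonal (fun p : Fin n × Fin 2 => v p.1) := by
  ext ⟨i, a⟩ ⟨j, b⟩
  by_cases h : i = j
  · subst h
    by_cases hab : a = b
    · subst hab
      simp only [realify, Matrix.diagonal_apply_eq]
      fin_cases a <;> simp [c2]
    · have hne : ((i,a) : Fin n × Fin 2) ≠ (i,b) := fun hc => hab (Prod.ext_iff.mp hc).2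
      rw [Matrix.diagonal_apply_ne _ hne]
      simp only [realify, Matrix.diagonal_apply_eq]
      fin_cases a <;> fin_cases b <;> simp_all [c2]
  · have hne : ((i,a) : Fin n × Fin 2) ≠ (j,b) := fun hc => h (Prod.ext_iff.mp hc).1
    simp only [realify, Matrix.diagonal_apply_ne _ h, map_zero c2,
      Matrix.diagonal_apply_ne _ hne]
    simp

lemma det_realify_hermitian {n : ℕ} {T : Matrix (Fin n) (Fin n) ℂ}
    (hT : T.IsHermitian) : (realify T).det = (T.det.re) ^ 2 := by
  have hspec := hT.spectral_theorem
  set U : Matrix (Fin n) (Fin n) ℂ := (hT.eigenvectorUnitary : Matrix (Fin n) (Fin n) ℂ)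
  have hU : U * star U = 1 := (Matrix.mem_unitaryGroup_iff).mp hT.eigenvectorUnitary.2
  have h1 : (realify T).det
      = (realify (U * Matrix.diagonal (RCLike.ofReal ∘ hT.eigenvalues))).det
        * (realify (star U)).det := by
    rw [← Matrix.det_mul, ← realify_mul]
    exact congrArg (fun M => (realify M).det) hspec
  have h2 : (realify U).det * (realify (star U)).det = 1 := by
    rw [← Matrix.det_mul, ← realify_mul, hU, realify_one, Matrix.det_one]
  have h3 : (realify (Matrix.diagonal (RCLike.ofReal ∘ hT.eigenvalues))).det
      = (∏ j, hT.eigenvalues j) ^ 2 := by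
    have : (Matrix.diagonal (RCLike.ofReal ∘ hT.eigenvalues) : Matrix (Fin n) (Fin n) ℂ)
        = Matrix.diagonal fun j => ((hT.eigenvalues j : ℝ) : ℂ) := rfl
    rw [this, realify_diagonal_real, Matrix.det_diagonal, Fintype.prod_prod_type]
    simp [pow_two, Finset.prod_mul_distrib]
  have h4 : T.det.re = ∏ j, hT.eigenvalues j := by
    rw [hT.det_eq_prod_eigenvalues]
    norm_cast
  rw [h1, realify_mul, Matrix.det_mul, h3, h4]
  rw [mul_comm (realify U).det, mul_assoc, h2, mul_one]

/-- Bezout-type 2×2 data: for any a b in ℤ[i] there is an SL₂ row operation killing b. -/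
lemma bezout_pair (a b : GaussianInt) :
    ∃ p q r s : GaussianInt, p * s - q * r = 1 ∧ r * a + s * b = 0 := by
  by_cases hb : b = 0
  · exact ⟨1, 0, 0, 1, by ring, by simp [hb]⟩
  · set d := EuclideanDomain.gcd a b with hd
    have hd0 : d ≠ 0 := fun h => hb ((EuclideanDomain.gcd_eq_zero_iff).mp h).2
    have hda : d ∣ a := EuclideanDomain.gcd_dvd_left a b
    have hdb : d ∣ b := EuclideanDomain.gcd_dvd_right a b
    have hbez : d = a * EuclideanDomain.gcdA a b + b * EuclideanDomain.gcdB a b :=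
      EuclideanDomain.gcd_eq_gcd_ab a b
    refine ⟨EuclideanDomain.gcdA a b, EuclideanDomain.gcdB a b, -(b / d), a / d, ?_, ?_⟩
    · have h1 : d * (EuclideanDomain.gcdA a b * (a / d) + EuclideanDomain.gcdB a b * (b / d))
          = d * 1 := by
        rw [mul_add, mul_one]
        rw [show d * (EuclideanDomain.gcdA a b * (a / d)) =
          EuclideanDomain.gcdA a b * (d * (a / d)) by ring]
        rw [show d * (EuclideanDomain.gcdB a b * (b / d)) =
          EuclideanDomain.gcdB a b * (d * (b / d)) by ring]
        rw [EuclideanDomain.mul_div_cancel' hd0 hda, EuclideanDomain.mul_div_cancel' hd0 hdb]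
        rw [hbez]; ring
      have := mul_left_cancel₀ hd0 h1
      calc EuclideanDomain.gcdA a b * (a / d) - EuclideanDomain.gcdB a b * -(b / d)
          = EuclideanDomain.gcdA a b * (a / d) + EuclideanDomain.gcdB a b * (b / d) := by ring
        _ = 1 := this
    · have h1 : d * (-(b / d) * a + a / d * b) = d * 0 := by
        rw [mul_zero, mul_add]
        rw [show d * (-(b / d) * a) = -((d * (b / d)) * a) by ring]
        rw [show d * (a / d * b) = (d * (a / d)) * b by ring]
        rw [EuclideanDomain.mul_div_cancel' hd0 hda, EuclideanDomain.mul_div_cancel' hd0 hdb]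
        ring
      exact mul_left_cancel₀ hd0 h1

/-- Embed an n×n matrix into (n+1)×(n+1) with a 1 in the top-left corner. -/
def embedM {n : ℕ} {R : Type*} [CommRing R] (U : Matrix (Fin n) (Fin n) R) :
    Matrix (Fin (n + 1)) (Fin (n + 1)) R :=
  fun i j =>
    if hi : i = 0 then (if j = 0 then 1 else 0)
    else if hj : j = 0 then 0 else U (i.pred hi) (j.pred hj)

lemma embedM_det {n : ℕ} {R : Type*} [CommRing R] (U : Matrix (Fin n) (Fin n) R) :
    (embedM U).det = U.det := by
  rw [Matrix.det_succ_row_zero]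
  rw [Fin.sum_univ_succ]
  have h0 : embedM U 0 0 = 1 := by simp [embedM]
  have hj : ∀ j : Fin n, embedM U 0 j.succ = 0 := fun j => by
    simp [embedM, Fin.succ_ne_zero]
  simp only [h0]
  rw [Finset.sum_eq_zero (fun j _ => by simp [hj j])]
  have : (embedM U).submatrix Fin.succ (Fin.succAbove 0) = U := by
    ext i j
    simp [embedM, Fin.succ_ne_zero, Fin.succAbove, Fin.pred_succ]
  rw [this]
  simp

lemma embedM_mulVec {n : ℕ} {R : Type*} [CommRing R] (U : Matrix (Fin n) (Fin n) R)
    (w : Fin (n + 1) → R) :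
    (embedM U).mulVec w = Fin.cons (w 0) (U.mulVec (w ∘ Fin.succ)) := by
  ext i
  refine Fin.cases ?_ (fun i => ?_) i
  · rw [Matrix.mulVec, dotProduct, Fin.sum_univ_succ]
    simp [embedM, Fin.succ_ne_zero]
  · rw [Matrix.mulVec, dotProduct, Fin.sum_univ_succ]
    simp only [embedM, Fin.succ_ne_zero i, dite_false, dif_neg, Fin.cons_succ]
    simp [Matrix.mulVec, dotProduct, Fin.pred_succ, Fin.succ_ne_zero]

/-- 2×2 operation on coordinates 0 and 1 of Fin (n+2). -/
def bzM {n : ℕ} {R : Type*} [CommRing R] (p q r s : R) :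
    Matrix (Fin (n + 2)) (Fin (n + 2)) R :=
  fun i j =>
    if i = 0 then (if j = 0 then p else if j = 1 then q else 0)
    else if i = 1 then (if j = 0 then r else if j = 1 then s else 0)
    else if i = j then 1 else 0

lemma bzM_det {n : ℕ} {R : Type*} [CommRing R] (p q r s : R) :
    (bzM (n := n) p q r s).det = p * s - q * r := by
  rw [Matrix.det_succ_row_zero, Fin.sum_univ_succ, Fin.sum_univ_succ]
  have h00 : bzM (n := n) p q r s 0 0 = p := by simp [bzM]
  have h01 : bzM (n := n) p q r s 0 1 = q := by simp [bzM]
  have h0j : ∀ j : Fin n, bzM (n := n) p q r s 0 j.succ.succ = 0 := fun j => by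
    simp [bzM, Fin.succ_ne_zero, (by simp [Fin.ext_iff] : (j.succ.succ : Fin (n+2)) ≠ 1)]
  rw [Finset.sum_eq_zero (fun j _ => by rw [h0j j]; ring)]
  have hm0 : ((bzM (n := n) p q r s).submatrix Fin.succ (Fin.succAbove 0)).det = s := by
    have : (bzM (n := n) p q r s).submatrix Fin.succ (Fin.succAbove 0)
        = Matrix.diagonal (fun i : Fin (n+1) => if i = 0 then s else 1) := by
      ext i j
      refine Fin.cases ?_ (fun i => ?_) i <;> refine Fin.cases ?_ (fun j => ?_) j <;>
        simp [bzM, Fin.succAbove, Fin.succ_ne_zero, Matrix.diagonal,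
          Fin.ext_iff, -Fin.val_eq_zero_iff] <;> omega
    rw [this, Matrix.det_diagonal]
    rw [Fin.prod_univ_succ]
    simp [Fin.succ_ne_zero]
  have hm1 : ((bzM (n := n) p q r s).submatrix Fin.succ (Fin.succAbove 1)).det = r := by
    have : (bzM (n := n) p q r s).submatrix Fin.succ (Fin.succAbove 1)
        = Matrix.diagonal (fun i : Fin (n+1) => if i = 0 then r else 1) := by
      ext i j
      refine Fin.cases ?_ (fun i => ?_) i <;> refine Fin.cases ?_ (fun j => ?_) j <;>
        simp [bzM, Fin.succAbove, Fin.succ_ne_zero, Matrix.diagonal,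
          Fin.ext_iff, -Fin.val_eq_zero_iff] <;> omega
    rw [this, Matrix.det_diagonal]
    rw [Fin.prod_univ_succ]
    simp [Fin.succ_ne_zero]
  simp only [show (Fin.succ 0 : Fin (n+2)) = 1 from rfl]
  rw [h00, h01, hm0, hm1]
  simp [Fin.val_one]
  ring

lemma bzM_mulVec {n : ℕ} {R : Type*} [CommRing R] (p q r s : R) (y : Fin (n + 2) → R) :
    ((bzM (n := n) p q r s).mulVec y 0 = p * y 0 + q * y 1) ∧
    ((bzM (n := n) p q r s).mulVec y 1 = r * y 0 + s * y 1) ∧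
    (∀ j : Fin n, (bzM (n := n) p q r s).mulVec y j.succ.succ = y j.succ.succ) := by
  have hsum : ∀ i, (bzM (n := n) p q r s).mulVec y i = ∑ j, bzM (n := n) p q r s i j * y j :=
    fun i => rfl
  refine ⟨?_, ?_, fun j => ?_⟩
  · rw [hsum, Fin.sum_univ_succ, Fin.sum_univ_succ]
    have : ∀ j : Fin n, bzM (n := n) p q r s 0 j.succ.succ * y j.succ.succ = 0 := fun j => by
      simp [bzM, Fin.succ_ne_zero, (by simp [Fin.ext_iff] : (j.succ.succ : Fin (n+2)) ≠ 1)]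
    rw [Finset.sum_eq_zero (fun j _ => this j)]
    simp [bzM]
  · rw [hsum, Fin.sum_univ_succ, Fin.sum_univ_succ]
    have : ∀ j : Fin n, bzM (n := n) p q r s 1 j.succ.succ * y j.succ.succ = 0 := fun j => by
      simp [bzM, Fin.succ_ne_zero, (by simp [Fin.ext_iff] : (j.succ.succ : Fin (n+2)) ≠ 1),
        (by simp [Fin.ext_iff] : (1 : Fin (n+2)) ≠ 0)]
    rw [Finset.sum_eq_zero (fun j _ => this j)]
    simp [bzM, (by simp [Fin.ext_iff] : (1 : Fin (n+2)) ≠ 0)]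
  · rw [hsum]
    have hne0 : (j.succ.succ : Fin (n+2)) ≠ 0 := Fin.succ_ne_zero _
    have hne1 : (j.succ.succ : Fin (n+2)) ≠ 1 := by simp [Fin.ext_iff]
    rw [Finset.sum_eq_single j.succ.succ]
    · simp [bzM, hne0, hne1]
    · intro k _ hk
      simp [bzM, hne0, hne1, Ne.symm hk]
    · intro h; exact absurd (Finset.mem_univ _) h

lemma clearVec : ∀ (n : ℕ) (w : Fin (n + 1) → GaussianInt),
    ∃ U : Matrix (Fin (n + 1)) (Fin (n + 1)) GaussianInt,
      U.det = 1 ∧ ∀ j, j ≠ 0 → U.mulVec w j = 0 := by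
  intro n
  induction n with
  | zero =>
    intro w
    exact ⟨1, Matrix.det_one, fun j hj => absurd (Fin.ext (by omega : (j : ℕ) = 0)) hj⟩
  | succ n IH =>
    intro w
    obtain ⟨U₁, hU₁det, hU₁⟩ := IH (w ∘ Fin.succ)
    set y : Fin (n + 2) → GaussianInt := (embedM U₁).mulVec w with hy
    have hy0 : y 0 = w 0 := by rw [hy, embedM_mulVec]; rfl
    have hy1 : y 1 = U₁.mulVec (w ∘ Fin.succ) 0 := by rw [hy, embedM_mulVec]; rfl
    have hyss : ∀ j : Fin n, y j.succ.succ = 0 := by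
      intro j
      rw [hy, embedM_mulVec]
      show (U₁.mulVec (w ∘ Fin.succ)) j.succ = 0
      exact hU₁ _ (Fin.succ_ne_zero j)
    obtain ⟨p, q, r, s, hdet2, hzero⟩ := bezout_pair (y 0) (y 1)
    refine ⟨bzM p q r s * embedM U₁, ?_, ?_⟩
    · rw [Matrix.det_mul, bzM_det, embedM_det, hU₁det, hdet2, mul_one]
    · intro j hj
      rw [← Matrix.mulVec_mulVec, ← hy]
      obtain ⟨i, rfl⟩ : ∃ i : Fin (n + 1), i.succ = j := by
        rcases Fin.eq_succ_of_ne_zero hj with ⟨i, rfl⟩; exact ⟨i, rfl⟩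
      refine Fin.cases ?_ (fun i => ?_) i
      · show (bzM p q r s).mulVec y 1 = 0
        rw [(bzM_mulVec p q r s y).2.1, hzero]
      · rw [(bzM_mulVec p q r s y).2.2 i, hyss i]

/-- Any nonzero Gaussian integer vector is a multiple of the first column of an SL matrix. -/
lemma exists_SL_column {n : ℕ} (w : Fin (n + 1) → GaussianInt) (hw : w ≠ 0) :
    ∃ γ : Matrix.SpecialLinearGroup (Fin (n + 1)) GaussianInt, ∃ g : GaussianInt,
      g ≠ 0 ∧ ∀ j, w j = (γ : Matrix (Fin (n + 1)) (Fin (n + 1)) GaussianInt) j 0 * g := by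
  obtain ⟨U, hUdet, hU⟩ := clearVec n w
  set γU : Matrix.SpecialLinearGroup (Fin (n + 1)) GaussianInt := ⟨U, hUdet⟩ with hγU
  set γ := γU⁻¹ with hγ
  have hinv : (γ : Matrix (Fin (n + 1)) (Fin (n + 1)) GaussianInt) * U = 1 := by
    have : ((γ * γU : Matrix.SpecialLinearGroup (Fin (n + 1)) GaussianInt) :
        Matrix (Fin (n + 1)) (Fin (n + 1)) GaussianInt) = 1 := by
      rw [hγ, inv_mul_cancel]; rfl
    simpa using this
  set g := U.mulVec w 0 with hg
  have hUw : U.mulVec w = (Pi.single 0 g : Fin (n + 1) → GaussianInt) := by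
    funext j
    by_cases hj : j = 0
    · subst hj; simp [hg]
    · rw [hU j hj, Pi.single_eq_of_ne hj]
  have hwj : ∀ j, w j = (γ : Matrix (Fin (n + 1)) (Fin (n + 1)) GaussianInt) j 0 * g := by
    intro j
    have : w = (γ : Matrix (Fin (n + 1)) (Fin (n + 1)) GaussianInt).mulVec (U.mulVec w) := by
      rw [Matrix.mulVec_mulVec, hinv, Matrix.one_mulVec]
    rw [this, hUw]
    rw [Matrix.mulVec_single]
    rfl
  refine ⟨γ, g, ?_, hwj⟩
  intro hg0
  apply hw
  funext j
  rw [hwj j, hg0, mul_zero]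
  rfl

variable {n : ℕ}

/-- The real coordinates equivalence. -/
def iotaE (n : ℕ) : ((Fin n × Fin 2) → ℝ) ≃ₗ[ℝ] EuclideanSpace ℂ (Fin n) where
  toFun x := WithLp.toLp 2 fun j => (x (j, 0) : ℂ) + (x (j, 1) : ℂ) * Complex.I
  invFun v := fun p => if p.2 = 0 then (v p.1).re else (v p.1).im
  map_add' x y := by
    ext j
    show ((x + y) (j,0) : ℂ) + ((x + y) (j,1) : ℂ) * Complex.I = _
    simp [Pi.add_apply]
    push_cast
    ring
  map_smul' c x := by
    ext j
    show ((c • x) (j,0) : ℂ) + ((c • x) (j,1) : ℂ) * Complex.I = _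
    simp [Pi.smul_apply, Complex.real_smul]
    push_cast
    ring
  left_inv x := by
    funext p
    obtain ⟨j, a⟩ := p
    fin_cases a <;> simp
  right_inv v := by
    ext j
    show ((v j).re : ℂ) + ((v j).im : ℂ) * Complex.I = v j
    exact Complex.re_add_im (v j)

lemma iotaE_apply (x : (Fin n × Fin 2) → ℝ) (j : Fin n) :
    iotaE n x j = (x (j, 0) : ℂ) + (x (j, 1) : ℂ) * Complex.I := rfl

lemma norm_iotaE_sq (y : (Fin n × Fin 2) → ℝ) :
    ‖iotaE n y‖ ^ 2 = ∑ j, Complex.normSq (iotaE n y j) := by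
  rw [EuclideanSpace.norm_eq]
  rw [Real.sq_sqrt (by positivity)]
  refine Finset.sum_congr rfl fun j _ => ?_
  rw [Complex.sq_norm]

/-- realify commutes with iota. -/
lemma iotaE_mulVec (A : Matrix (Fin n) (Fin n) ℂ) (x : (Fin n × Fin 2) → ℝ) (j : Fin n) :
    iotaE n ((realify A).mulVec x) j = A.mulVec (fun k => iotaE n x k) j := by
  rw [iotaE_apply]
  show ((realify A).mulVec x (j, 0) : ℂ) + ((realify A).mulVec x (j, 1) : ℂ) * Complex.I = _
  simp only [Matrix.mulVec, dotProduct, Fintype.sum_prod_type, Fin.sum_univ_two]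
  simp only [realify_apply]
  apply Complex.ext <;>
    (push_cast
     simp [Complex.add_re, Complex.add_im, Complex.mul_re, Complex.mul_im, iotaE_apply,
       Finset.sum_add_distrib]
     try ring)

lemma value_eq {T A : Matrix (Fin n) (Fin n) ℂ} (hAH : Aᴴ = A) (hAA : A * A = T)
    (v : Fin n → ℂ) :
    dotProduct (star v) (T.mulVec v)
      = dotProduct (star (A.mulVec v)) (A.mulVec v) := by
  rw [Matrix.star_mulVec, ← Matrix.dotProduct_mulVec, hAH, Matrix.mulVec_mulVec, hAA]

lemma re_dot_self (u : Fin n → ℂ) :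
    (dotProduct (star u) u).re = ∑ j, Complex.normSq (u j) := by
  rw [dotProduct, Complex.re_sum]
  refine Finset.sum_congr rfl fun j _ => ?_
  simp [Complex.mul_re, Complex.normSq_apply]

lemma int_coords {x : (Fin n × Fin 2) → ℝ}
    (hx : x ∈ Submodule.span ℤ (Set.range ⇑(Pi.basisFun ℝ (Fin n × Fin 2)))) :
    ∃ m : Fin n × Fin 2 → ℤ, ∀ p, x p = (m p : ℝ) := by
  refine Submodule.span_induction ?_ ?_ ?_ ?_ hx
  · rintro y ⟨i, rfl⟩
    refine ⟨Pi.single i 1, fun p => ?_⟩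
    by_cases h : p = i <;> simp [Pi.basisFun_apply, Pi.single_apply, h]
  · exact ⟨0, by simp⟩
  · rintro y z - - ⟨m₁, h₁⟩ ⟨m₂, h₂⟩
    exact ⟨m₁ + m₂, fun p => by simp [h₁ p, h₂ p]⟩
  · rintro a y - ⟨m₁, h₁⟩
    refine ⟨a • m₁, fun p => ?_⟩
    simp [h₁ p, zsmul_eq_mul]

open scoped MatrixOrder in
lemma minkowski_gauss (n : ℕ) (hn : 1 ≤ n) :
    ∃ B : ℝ, 0 < B ∧ ∀ T : Matrix (Fin n) (Fin n) ℂ, T.PosDef →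
      ∃ w : Fin n → GaussianInt, w ≠ 0 ∧
        (dotProduct (star fun j => (GaussianInt.toComplex (w j)))
          (T.mulVec fun j => GaussianInt.toComplex (w j))).re
          ≤ B * T.det.re ^ ((1 : ℝ) / n) := by
  have hn0 : (n : ℝ) ≠ 0 := Nat.cast_ne_zero.mpr (by omega)
  set N := n * 2 with hN
  have hfinrank : Module.finrank ℝ ((Fin n × Fin 2) → ℝ) = N := by
    rw [Module.finrank_fintype_fun_eq_card, Fintype.card_prod, Fintype.card_fin,
      Fintype.card_fin]
  -- the unit "ball"
  set S₁ : Set ((Fin n × Fin 2) → ℝ) := {y : ((Fin n × Fin 2) → ℝ) | ‖iotaE n y‖ ≤ 1} with hS₁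
  have hS₁closed : IsClosed S₁ := by
    have hcont : Continuous fun y : ((Fin n × Fin 2) → ℝ) => ‖iotaE n y‖ :=
      ((iotaE n).toLinearMap.continuous_of_finiteDimensional).norm
    exact isClosed_le hcont continuous_const
  have hS₁cpt : IsCompact S₁ := by
    have himg : S₁ = (fun v => (iotaE n).symm v) '' Metric.closedBall 0 1 := by
      ext y
      constructor
      · intro hy
        exact ⟨iotaE n y, by simpa [hS₁, Metric.mem_closedBall, dist_zero_right] using hy,
          by simp⟩
      · rintro ⟨v, hv, rfl⟩
        simpa [hS₁, Metric.mem_closedBall, dist_zero_right] using hv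
    rw [himg]
    exact (isCompact_closedBall 0 1).image
      ((iotaE n).symm.toLinearMap.continuous_of_finiteDimensional)
  set c : ENNReal := volume S₁ with hc
  have hcT : c ≠ ⊤ := hS₁cpt.measure_lt_top.ne
  have hc0 : 0 < c := by
    have hopen : IsOpen {y : ((Fin n × Fin 2) → ℝ) | ‖iotaE n y‖ < 1} :=
      isOpen_lt ((iotaE n).toLinearMap.continuous_of_finiteDimensional).norm continuous_const
    have hsub : {y : ((Fin n × Fin 2) → ℝ) | ‖iotaE n y‖ < 1} ⊆ S₁ := by
      intro y hy
      show ‖iotaE n y‖ ≤ 1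
      exact le_of_lt hy
    refine lt_of_lt_of_le ?_ (measure_mono hsub)
    refine hopen.measure_pos volume ⟨0, ?_⟩
    simp
  set c' : ℝ := c.toReal with hc'
  have hc'0 : 0 < c' := ENNReal.toReal_pos hc0.ne' hcT
  set B : ℝ := (2 ^ (N + 1) / c') ^ ((n : ℝ)⁻¹) with hB
  have hBpos : 0 < B := Real.rpow_pos_of_pos (by positivity) _
  have hBn : B ^ n = 2 ^ (N + 1) / c' := by
    rw [hB, ← Real.rpow_natCast ((2 ^ (N + 1) / c') ^ ((n : ℝ)⁻¹)) n, ← Real.rpow_mul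
      (by positivity), inv_mul_cancel₀ hn0, Real.rpow_one]
  refine ⟨B, hBpos, ?_⟩
  intro T hT
  set d : ℝ := T.det.re with hd
  have hdpos : 0 < d := by
    have := hT.det_pos
    rw [Complex.lt_def] at this
    exact this.1
  set A : Matrix (Fin n) (Fin n) ℂ := CFC.sqrt T with hA
  have hAH : Aᴴ = A := (CFC.sqrt_nonneg T).posSemidef.1
  have hAA : A * A = T := CFC.sqrt_mul_sqrt_self T hT.posSemidef.nonneg
  set f : ((Fin n × Fin 2) → ℝ) →ₗ[ℝ] ((Fin n × Fin 2) → ℝ) := Matrix.toLin' (realify A) with hf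
  have habs : |(realify A).det| = d := by
    have hsq : (realify A).det ^ 2 = d ^ 2 := by
      rw [pow_two, ← Matrix.det_mul, ← realify_mul, hAA, det_realify_hermitian hT.1]
    have h1 : (|(realify A).det| - d) * (|(realify A).det| + d) = 0 := by
      have h2 : |(realify A).det| ^ 2 = d ^ 2 := by rw [sq_abs]; exact hsq
      linear_combination h2
    rcases mul_eq_zero.mp h1 with h | h
    · linarith
    · nlinarith [abs_nonneg (realify A).det]
  have hdetf : LinearMap.det f = (realify A).det := LinearMap.det_toLin' _
  have hdetne : LinearMap.det f ≠ 0 := by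
    rw [hdetf]
    intro h0
    rw [h0, abs_zero] at habs
    exact hdpos.ne habs
  set ρ : ℝ := Real.sqrt (B * d ^ ((1 : ℝ) / n)) with hρdef
  have hρpos : 0 < ρ := Real.sqrt_pos.mpr (by positivity)
  have hρ2 : ρ ^ 2 = B * d ^ ((1 : ℝ) / n) := Real.sq_sqrt (by positivity)
  set Sρ : Set ((Fin n × Fin 2) → ℝ) := {y : ((Fin n × Fin 2) → ℝ) | ‖iotaE n y‖ ≤ ρ} with hSρ
  set S : Set ((Fin n × Fin 2) → ℝ) := f ⁻¹' Sρ with hS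
  -- convexity and symmetry
  have hconv : Convex ℝ S := by
    have : S = ((iotaE n).toLinearMap.comp f) ⁻¹' Metric.closedBall 0 ρ := by
      ext y
      simp [hS, hSρ, Metric.mem_closedBall, dist_zero_right]
    rw [this]
    exact (convex_closedBall (0 : EuclideanSpace ℂ (Fin n)) ρ).linear_preimage _
  have hsymm : ∀ y ∈ S, -y ∈ S := by
    intro y hy
    simp only [hS, hSρ, Set.mem_preimage, Set.mem_setOf_eq, map_neg, norm_neg] at hy ⊢
    exact hy
  -- volume computation
  have hSρ_smul : Sρ = ρ • S₁ := by
    ext y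
    rw [Set.mem_smul_set_iff_inv_smul_mem₀ hρpos.ne']
    simp only [hSρ, hS₁, Set.mem_setOf_eq, _root_.map_smul, norm_smul, norm_inv,
      Real.norm_eq_abs, abs_of_pos hρpos]
    rw [inv_mul_le_iff₀ hρpos, mul_one]
  have hρN : ρ ^ N = (2 ^ (N + 1) / c') * d := by
    have h1 : ρ ^ N = (ρ ^ 2) ^ n := by
      rw [← pow_mul]
      congr 1
      omega
    rw [h1, hρ2, mul_pow, hBn, ← Real.rpow_natCast (d ^ ((1:ℝ)/n)) n,
      ← Real.rpow_mul hdpos.le, one_div, inv_mul_cancel₀ hn0, Real.rpow_one]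
  have hvolS : volume S = ENNReal.ofReal (2 ^ (N + 1)) := by
    rw [hS, MeasureTheory.Measure.addHaar_preimage_linearMap volume hdetne, hSρ_smul,
      MeasureTheory.Measure.addHaar_smul, ← hc, hfinrank, hρN, hdetf]
    rw [← ENNReal.ofReal_toReal hcT, ← hc', ← ENNReal.ofReal_mul (by positivity),
      ← ENNReal.ofReal_mul (by positivity)]
    congr 1
    rw [abs_inv, habs, abs_of_pos (by positivity : (0:ℝ) < (2 ^ (N + 1) / c') * d)]
    field_simp
  -- Minkowski
  set b := Pi.basisFun ℝ (Fin n × Fin 2) with hb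
  haveI : Countable (Submodule.span ℤ (Set.range ⇑b)).toAddSubgroup :=
    inferInstanceAs (Countable (Submodule.span ℤ (Set.range ⇑b)))
  have hFvol : volume (ZSpan.fundamentalDomain b) = 1 := by
    rw [ZSpan.volume_fundamentalDomain]
    have : Matrix.of ⇑b = (1 : Matrix (Fin n × Fin 2) (Fin n × Fin 2) ℝ) := by
      ext p q
      simp [hb, Matrix.one_apply, Pi.single_apply, eq_comm]
    rw [this, Matrix.det_one]
    simp
  have fund := ZSpan.isAddFundamentalDomain' b volume
  have hlt : volume (ZSpan.fundamentalDomain b) * 2 ^ Module.finrank ℝ ((Fin n × Fin 2) → ℝ) < volume S := by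
    rw [hFvol, one_mul, hvolS, hfinrank]
    calc (2 : ENNReal) ^ N = ENNReal.ofReal (2 ^ N) := by
          rw [ENNReal.ofReal_pow (by norm_num)]
          norm_num
      _ < ENNReal.ofReal (2 ^ (N + 1)) := by
          rw [ENNReal.ofReal_lt_ofReal_iff (by positivity)]
          exact pow_lt_pow_right₀ (by norm_num) (by omega)
  obtain ⟨x, hx0, hxS⟩ :=
    MeasureTheory.exists_ne_zero_mem_lattice_of_measure_mul_two_pow_lt_measure
      (μ := volume) (s := S) fund hsymm hconv hlt
  have hxmem : (x : (Fin n × Fin 2) → ℝ) ∈ Submodule.span ℤ (Set.range ⇑b) := by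
    exact Submodule.mem_toAddSubgroup _ |>.mp x.2
  obtain ⟨m, hm⟩ := int_coords hxmem
  set w : Fin n → GaussianInt := fun j => ⟨m (j, 0), m (j, 1)⟩ with hw
  have hvw : ∀ j, GaussianInt.toComplex (w j) = iotaE n (x : (Fin n × Fin 2) → ℝ) j := by
    intro j
    rw [hw, GaussianInt.toComplex_def', iotaE_apply, hm (j,0), hm (j,1)]
    push_cast
    ring
  have hwne : w ≠ 0 := by
    intro hw0
    apply hx0
    have hxE : (x : (Fin n × Fin 2) → ℝ) = 0 := by
      funext p
      obtain ⟨j, a⟩ := p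
      have h1 : w j = 0 := by rw [hw0]; rfl
      rw [hw] at h1
      have h2 : m (j, 0) = 0 ∧ m (j, 1) = 0 := by
        constructor
        · exact congrArg Zsqrtd.re h1
        · exact congrArg Zsqrtd.im h1
      fin_cases a
      · show (x : (Fin n × Fin 2) → ℝ) (j, 0) = 0
        rw [hm (j, 0), h2.1]; simp
      · show (x : (Fin n × Fin 2) → ℝ) (j, 1) = 0
        rw [hm (j, 1), h2.2]; simp
    exact Subtype.ext hxE
  refine ⟨w, hwne, ?_⟩
  have hveq : (fun j => GaussianInt.toComplex (w j)) = fun j => iotaE n (x : (Fin n × Fin 2) → ℝ) j := by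
    funext j; exact hvw j
  rw [hveq]
  rw [value_eq hAH hAA, re_dot_self]
  have hmulvec : ∀ j, A.mulVec (fun k => iotaE n (x : (Fin n × Fin 2) → ℝ) k) j = iotaE n (f (x : (Fin n × Fin 2) → ℝ)) j := by
    intro j
    rw [← iotaE_mulVec A (x : (Fin n × Fin 2) → ℝ) j, hf, Matrix.toLin'_apply]
  have : ∑ j, Complex.normSq (A.mulVec (fun k => iotaE n (x : (Fin n × Fin 2) → ℝ) k) j)
      = ‖iotaE n (f (x : (Fin n × Fin 2) → ℝ))‖ ^ 2 := by
    rw [norm_iotaE_sq]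
    exact Finset.sum_congr rfl fun j _ => by rw [hmulvec j]
  rw [this]
  have hxSρ : ‖iotaE n (f (x : (Fin n × Fin 2) → ℝ))‖ ≤ ρ := hxS
  calc ‖iotaE n (f (x : (Fin n × Fin 2) → ℝ))‖ ^ 2 ≤ ρ ^ 2 := by
        exact pow_le_pow_left₀ (norm_nonneg _) hxSρ 2
    _ = B * d ^ ((1 : ℝ) / n) := hρ2

lemma entry_eq {n : ℕ} (T M : Matrix (Fin n) (Fin n) ℂ) (z : Fin n) :
    (Mᴴ * T * M) z z
      = dotProduct (star fun j => M j z) (T.mulVec fun j => M j z) := by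
  simp only [Matrix.mul_apply, Matrix.conjTranspose_apply, dotProduct, Matrix.mulVec,
    Finset.mul_sum, Finset.sum_mul, Pi.star_apply]
  rw [Finset.sum_comm]
  refine Finset.sum_congr rfl fun j _ => Finset.sum_congr rfl fun k _ => by ring

/-- For every `n ≥ 1` there exists a constant `B > 0` with the following property: for
every `n×n` complex positive definite (Hermitian) matrix `T` there exists
`γ ∈ SL_n(ℤ[i])` (Gaussian-integer entries, determinant 1) such that, viewing `γ` as a
complex matrix via the canonical embedding `ℤ[i] → ℂ`,
`Re((γᴴ · T · γ)₀₀) ≤ B · Re(det T)^{1/n}`. -/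
theorem stmt_15 (n : ℕ) (hn : 1 ≤ n) :
    ∃ B : ℝ, 0 < B ∧ ∀ T : Matrix (Fin n) (Fin n) ℂ, T.PosDef →
      ∃ γ : Matrix.SpecialLinearGroup (Fin n) GaussianInt,
        letI g : Matrix (Fin n) (Fin n) ℂ :=
          ((γ : Matrix (Fin n) (Fin n) GaussianInt)).map
            (fun a : GaussianInt => GaussianInt.toComplex a)
        ((gᴴ * T * g) ⟨0, hn⟩ ⟨0, hn⟩).re ≤ B * T.det.re ^ ((1 : ℝ) / n) := by
  obtain ⟨B, hB, hmain⟩ := minkowski_gauss n hn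
  refine ⟨B, hB, ?_⟩
  intro T hT
  obtain ⟨w, hwne, hwval⟩ := hmain T hT
  obtain ⟨m, rfl⟩ : ∃ m, n = m + 1 := ⟨n - 1, by omega⟩
  obtain ⟨γ, u, hu0, hcol⟩ := exists_SL_column w hwne
  refine ⟨γ, ?_⟩
  set M : Matrix (Fin (m + 1)) (Fin (m + 1)) ℂ :=
    ((γ : Matrix (Fin (m + 1)) (Fin (m + 1)) GaussianInt)).map
      (fun a : GaussianInt => GaussianInt.toComplex a) with hM
  show ((Mᴴ * T * M) ⟨0, hn⟩ ⟨0, hn⟩).re ≤ B * T.det.re ^ ((1 : ℝ) / (m + 1 : ℕ))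
  have hz : (⟨0, hn⟩ : Fin (m + 1)) = 0 := rfl
  rw [hz, entry_eq]
  set col : Fin (m + 1) → ℂ := fun j => M j 0 with hcoldef
  set uc : ℂ := GaussianInt.toComplex u with huc
  -- factorization of the value at w
  have hfact : (fun j => GaussianInt.toComplex (w j)) = fun j => col j * uc := by
    funext j
    rw [hcol j, _root_.map_mul]
    rfl
  have hval : (dotProduct (star fun j => GaussianInt.toComplex (w j))
      (T.mulVec fun j => GaussianInt.toComplex (w j)))
      = Complex.normSq uc * dotProduct (star col) (T.mulVec col) := by
    rw [hfact]
    have h1 : star (fun j => col j * uc) = fun j => star (col j) * star uc := by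
      funext j; simp [mul_comm]
    have h2 : T.mulVec (fun j => col j * uc) = fun j => T.mulVec col j * uc := by
      funext j
      simp [Matrix.mulVec, dotProduct, Finset.sum_mul, mul_assoc]
    rw [h1, h2]
    simp only [dotProduct, Pi.star_apply]
    rw [Finset.mul_sum]
    refine Finset.sum_congr rfl fun j _ => ?_
    have : (Complex.normSq uc : ℂ) = star uc * uc := by
      rw [Complex.normSq_eq_conj_mul_self]; rfl
    rw [this]
    ring
  have hnormsq : 1 ≤ Complex.normSq uc := by
    rw [huc, ← GaussianInt.intCast_real_norm]
    have h1 : 0 < u.norm := by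
      rcases lt_or_eq_of_le (Zsqrtd.norm_nonneg (by norm_num) u) with h | h
      · exact h
      · exact absurd ((Zsqrtd.norm_eq_zero_iff (by norm_num) u).mp h.symm) hu0
    exact_mod_cast h1
  have hq0 : 0 ≤ (dotProduct (star col) (T.mulVec col)).re :=
    hT.posSemidef.re_dotProduct_nonneg col
  have hre : (dotProduct (star fun j => GaussianInt.toComplex (w j))
      (T.mulVec fun j => GaussianInt.toComplex (w j))).re
      = Complex.normSq uc * (dotProduct (star col) (T.mulVec col)).re := by
    rw [hval]
    simp [Complex.mul_re, Complex.ofReal_im]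
  have hle : (dotProduct (star col) (T.mulVec col)).re
      ≤ (dotProduct (star fun j => GaussianInt.toComplex (w j))
        (T.mulVec fun j => GaussianInt.toComplex (w j))).re := by
    rw [hre]
    nlinarith
  exact le_trans hle hwval

end
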